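/- Let ε ∈ ℝ and let k ≥ 1 be an integer. Every cycle in the bidding graph G of cardinality at most k+1 has mean length at least −ε if and only if the relaxed KARP-based bidding rule holds: for every κ with 1 ≤ κ ≤ k and every sequence of observation indices t_0, t_1, …, t_κ whose bid bundles are pairwise distinct, (p_{t_κ} − p_{t_0})·x_{t_0} ≥ Σ_{i=1}^{κ} (p_{t_i} − p_{t_{i−1}})·x_{t_i} − (κ+1)·ε. -/
import Mathlib


open Finset

/-- Euclidean inner product on `ℝⁿ`. -/
def dotp {n : ℕ} (p y : Fin n → ℝ) : ℝ := ∑ i, p i * y i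

/-- A bundle is a 0-1 vector. -/
def IsBundle {n : ℕ} (y : Fin n → ℝ) : Prop := ∀ i, y i = 0 ∨ y i = 1

/-- The cyclically next index in `Fin m`. -/
def cnext {m : ℕ} (i : Fin m) : Fin m := ⟨(i.val + 1) % m, Nat.mod_lt _ i.pos⟩

-- The length of the arc of the bidding graph from bid bundle `x t` to bundle `y`:
-- the minimum of `p s · (y - x t)` over all observations `s` bidding the same bundle as `t`.
open Classical in
noncomputable def arcLen {n T : ℕ} (p x : Fin T → Fin n → ℝ) (t : Fin T)
    (y : Fin n → ℝ) : ℝ :=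
  (Finset.univ.filter fun s => x s = x t).inf' ⟨t, by simp⟩
    (fun s => dotp (p s) (y - x t))

/-- `v` is an `ε`-approximate virtual valuation function for the data `(p, x)`. -/
def IsApproxVV  {n T : ℕ} (p x : Fin T → Fin n → ℝ) (ε : ℝ)
    (v : (Fin n → ℝ) → ℝ) : Prop :=
  ∀ t : Fin T, ∀ y : Fin n → ℝ, IsBundle y →
    v (x t) - dotp (p t) (x t) ≥ v y - dotp (p t) y - ε

/-- `v` is individually rational for the data `(p, x)`. -/
def IndivRational {n T : ℕ} (p x : Fin T → Fin n → ℝ)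
    (v : (Fin n → ℝ) → ℝ) : Prop :=
  ∀ t : Fin T, v (x t) ≥ dotp (p t) (x t)

/-- The set of mean lengths of cycles of the bidding graph. -/
noncomputable def meanCycleLens {n T : ℕ} (p x : Fin T → Fin n → ℝ) : Set ℝ :=
  {r | ∃ m : ℕ, 2 ≤ m ∧ ∃ c : Fin m → Fin T,
      Function.Injective (fun i => x (c i)) ∧
      r = (∑ i : Fin m, arcLen p x (c i) (x (c (cnext i)))) / m}
lemma dotp_sub_right' {n : ℕ} (p a b : Fin n → ℝ) : dotp p (a - b) = dotp p a - dotp p b := by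
  simp [dotp, mul_sub, Finset.sum_sub_distrib]

lemma dotp_sub_left' {n : ℕ} (p q a : Fin n → ℝ) : dotp (p - q) a = dotp p a - dotp q a := by
  simp [dotp, sub_mul, Finset.sum_sub_distrib]

lemma cnext_castSucc' {m : ℕ} (j : Fin m) : cnext (j.castSucc) = j.succ := by
  ext
  simp [cnext, Nat.mod_eq_of_lt (by omega : j.val + 1 < m + 1)]

lemma cnext_last' (m : ℕ) : cnext (Fin.last m) = 0 := by
  ext
  simp [cnext]

lemma cycle_identity' {n T κ : ℕ} (p x : Fin T → Fin n → ℝ) (t : Fin (κ+1) → Fin T) :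
    ∑ i : Fin (κ+1), dotp (p (t i)) (x (t (cnext i)) - x (t i))
      = dotp (p (t (Fin.last κ)) - p (t 0)) (x (t 0))
        - ∑ i : Fin κ, dotp (p (t i.succ) - p (t i.castSucc)) (x (t i.succ)) := by
  simp only [dotp_sub_right', dotp_sub_left', Finset.sum_sub_distrib]
  rw [Fin.sum_univ_castSucc (f := fun i => dotp (p (t i)) (x (t (cnext i))))]
  simp only [cnext_castSucc', cnext_last']
  rw [Fin.sum_univ_succ (f := fun i => dotp (p (t i)) (x (t i)))]
  ring

lemma arcLen_le' {n T : ℕ} (p x : Fin T → Fin n → ℝ) (t : Fin T) (y : Fin n → ℝ) :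
    arcLen p x t y ≤ dotp (p t) (y - x t) := by
  classical
  exact Finset.inf'_le _ (by simp)

lemma arcLen_exists' {n T : ℕ} (p x : Fin T → Fin n → ℝ) (t : Fin T) (y : Fin n → ℝ) :
    ∃ s : Fin T, x s = x t ∧ arcLen p x t y = dotp (p s) (y - x t) := by
  classical
  obtain ⟨s, hsmem, hval⟩ := Finset.exists_mem_eq_inf'
    (s := Finset.univ.filter fun s => x s = x t) ⟨t, by simp⟩
    (fun s => dotp (p s) (y - x t))
  exact ⟨s, by simpa using hsmem, hval⟩

/-- Every cycle of the bidding graph of cardinality at most `k+1` has mean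
length at least `-ε` if and only if the relaxed KARP-based bidding rule holds. -/
theorem short_cycles_iff_relaxed_karp {n T : ℕ}
    (p x : Fin T → Fin n → ℝ)
    (hp : ∀ t i, 0 ≤ p t i) (hx : ∀ t, IsBundle (x t))
    (ε : ℝ) (k : ℕ) (hk : 1 ≤ k) :
    (∀ m : ℕ, 2 ≤ m → m ≤ k + 1 → ∀ c : Fin m → Fin T,
      Function.Injective (fun i => x (c i)) →
      -ε ≤ (∑ i : Fin m, arcLen p x (c i) (x (c (cnext i)))) / m)
    ↔
    (∀ κ : ℕ, 1 ≤ κ → κ ≤ k → ∀ t : Fin (κ + 1) → Fin T,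
      Function.Injective (fun i => x (t i)) →
      dotp (p (t (Fin.last κ)) - p (t 0)) (x (t 0)) ≥
        (∑ i : Fin κ, dotp (p (t i.succ) - p (t i.castSucc)) (x (t i.succ)))
          - (κ + 1) * ε) := by
  constructor
  · intro h κ hκ1 hκk t hinj
    have hcyc := h (κ + 1) (by omega) (by omega) t hinj
    have hpos : (0 : ℝ) < ((κ + 1 : ℕ) : ℝ) := by positivity
    have hsum : -ε * ((κ + 1 : ℕ) : ℝ) ≤
        ∑ i : Fin (κ + 1), arcLen p x (t i) (x (t (cnext i))) :=
      (le_div_iff₀ hpos).mp hcyc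
    have hle : ∑ i : Fin (κ + 1), arcLen p x (t i) (x (t (cnext i))) ≤
        ∑ i : Fin (κ + 1), dotp (p (t i)) (x (t (cnext i)) - x (t i)) :=
      Finset.sum_le_sum fun i _ => arcLen_le' p x (t i) _
    have hid := cycle_identity' p x t
    have : (κ : ℝ) + 1 = ((κ + 1 : ℕ) : ℝ) := by push_cast; ring
    rw [ge_iff_le]
    rw [this]
    nlinarith [hsum, hle, hid]
  · intro h m hm2 hmk c hinj
    obtain ⟨κ, rfl⟩ : ∃ κ, m = κ + 1 := ⟨m - 1, by omega⟩
    have hs : ∀ i : Fin (κ + 1), ∃ s : Fin T, x s = x (c i) ∧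
        arcLen p x (c i) (x (c (cnext i))) = dotp (p s) (x (c (cnext i)) - x (c i)) :=
      fun i => arcLen_exists' p x (c i) _
    choose s hs1 hs2 using hs
    have hxs : ∀ i, x (s i) = x (c i) := hs1
    have hinj' : Function.Injective (fun i => x (s i)) := by
      have : (fun i => x (s i)) = fun i => x (c i) := funext fun i => hxs i
      rw [this]; exact hinj
    have hkarp := h κ (by omega) (by omega) s hinj'
    have hid := cycle_identity' p x s
    have heq : ∀ i : Fin (κ + 1),
        arcLen p x (c i) (x (c (cnext i))) = dotp (p (s i)) (x (s (cnext i)) - x (s i)) := by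
      intro i
      rw [hs2 i, hxs i, hxs (cnext i)]
    have hsum : ∑ i : Fin (κ + 1), arcLen p x (c i) (x (c (cnext i)))
        = ∑ i : Fin (κ + 1), dotp (p (s i)) (x (s (cnext i)) - x (s i)) :=
      Finset.sum_congr rfl fun i _ => heq i
    have hpos : (0 : ℝ) < ((κ + 1 : ℕ) : ℝ) := by positivity
    rw [hsum, le_div_iff₀ hpos]
    have : ((κ + 1 : ℕ) : ℝ) = (κ : ℝ) + 1 := by push_cast; ring
    rw [this]
    nlinarith [hkarp, hid]
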